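/- Let κ be a weakly compact cardinal and let A ⊆ κ be a set of infinite regular cardinals that is unbounded in κ but nonstationary in κ. Then κ ∉ spec(A): for every family F ⊆ ∏A with |F| = κ there is a subfamily F₀ ⊆ F with |F₀| = κ that is bounded in (∏A, ≤). -/

import Mathlib

universe u

open Cardinal Set

namespace TukeySpec

/-- A subset `S` of a preorder is cofinal if every element has an upper bound in `S`. -/
def IsCofinal {P : Type*} [Preorder P] (S : Set P) : Prop :=
  ∀ p : P, ∃ s ∈ S, p ≤ s

/-- `Q` is a Tukey quotient of `P` (i.e. `P ≥_T Q`): there is a map `P → Q`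
sending cofinal sets to cofinal sets. -/
def TukeyQuot (P : Type*) (Q : Type*) [Preorder P] [Preorder Q] : Prop :=
  ∃ φ : P → Q, ∀ S : Set P, IsCofinal S → IsCofinal (φ '' S)

/-- `P` has calibre `(κ, l, m)`. -/
def Calibre (P : Type u) [Preorder P] (κ l m : Cardinal.{u}) : Prop :=
  ∀ P' : Set P, #P' = κ → ∃ R ⊆ P', #R = l ∧ ∀ B ⊆ R, #B = m → BddAbove B

/-- `P` has calibre `κ` (the simplified form): every `κ`-sized subset has a
`κ`-sized subset which is bounded in `P`. -/
def CalibreSimple (P : Type u) [Preorder P] (κ : Cardinal.{u}) : Prop :=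
  ∀ P' : Set P, #P' = κ → ∃ R ⊆ P', #R = κ ∧ BddAbove R

/-- The Tukey spectrum of a poset: all regular cardinals `κ` with `P ≥_T κ`,
where `κ` carries its usual (ordinal) ordering. -/
def specPoset (P : Type u) [Preorder P] : Set Cardinal.{u} :=
  {κ | κ.IsRegular ∧ TukeyQuot P ↥(Set.Iio κ.ord)}

/-- The product `∏A` of a set of cardinals: all functions on `A` with
`f a < a` (as ordinals). -/
def piSet (A : Set Cardinal.{0}) : Set (↥A → Ordinal.{0}) :=
  {f | ∀ a : ↥A, f a < (a : Cardinal).ord}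

/-- A family of members of `∏A` is bounded if it has an upper bound in `(∏A, ≤)`
(pointwise order). -/
def BddIn (A : Set Cardinal.{0}) (S : Set (↥A → Ordinal.{0})) : Prop :=
  ∃ h ∈ piSet A, ∀ f ∈ S, ∀ a : ↥A, f a ≤ h a

/-- The Tukey spectrum of a set `A` of regular cardinals: all regular `κ` for which
there is a `κ`-sized family `F ⊆ ∏A` all of whose `κ`-sized subfamilies are
unbounded in `(∏A, ≤)`. -/
def spec (A : Set Cardinal.{0}) : Set Cardinal.{0} :=
  {κ | κ.IsRegular ∧ ∃ F ⊆ piSet A, #F = Cardinal.lift.{1} κ ∧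
    ∀ F₀ ⊆ F, #F₀ = Cardinal.lift.{1} κ → ¬ BddIn A F₀}

/-- `cf(∏A/D)`: the least cardinality of a subset of `∏A` which is cofinal
modulo the ultrafilter `D`. -/
noncomputable def cofUlt (A : Set Cardinal.{0}) (D : Ultrafilter ↥A) : Cardinal.{1} :=
  sInf {c : Cardinal.{1} | ∃ S ⊆ piSet A, #S = c ∧
    ∀ f ∈ piSet A, ∃ g ∈ S, {a : ↥A | f a ≤ g a} ∈ D}

/-- `pcf(A)`: the set of all cofinalities `cf(∏A/D)` as `D` ranges over
ultrafilters on `A`. -/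
def pcf (A : Set Cardinal.{0}) : Set Cardinal.{0} :=
  {κ | ∃ D : Ultrafilter ↥A, Cardinal.lift.{1} κ = cofUlt A D}

/-- `ub(F)`: the set of coordinates `a ∈ A` where the family `F` is unbounded. -/
def ub (A : Set Cardinal.{0}) (F : Set (↥A → Ordinal.{0})) : Set ↥A :=
  {a | ∀ β < (a : Cardinal).ord, ∃ f ∈ F, β < f a}

/-- The strong part of the Tukey spectrum: `l ∈ spec*(A)` iff there is an
`l`-sized family `F ⊆ ∏A` such that every `l`-sized subfamily has a set of
unbounded coordinates which is unbounded in `sup A`. -/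
def specStarMem (A : Set Cardinal.{0}) (l : Cardinal.{0}) : Prop :=
  l.IsRegular ∧ ∃ F ⊆ piSet A, #F = Cardinal.lift.{1} l ∧
    ∀ F₀ ⊆ F, #F₀ = Cardinal.lift.{1} l →
      ∀ β < sSup A, ∃ a ∈ ub A F₀, β < (a : Cardinal)

/-- `κ` is a limit point of the set `X` of cardinals. -/
def IsLimitPt (X : Set Cardinal.{0}) (κ : Cardinal.{0}) : Prop :=
  ∀ β < κ, ∃ x ∈ X, β < x ∧ x < κ

/-- `C` is a closed unbounded subset of `κ`. -/
def IsClubIn (C : Set Ordinal.{0}) (κ : Ordinal.{0}) : Prop :=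
  C ⊆ Set.Iio κ ∧ (∀ β < κ, ∃ o ∈ C, β < o) ∧
    ∀ β < κ, β ≠ 0 → (∀ γ < β, ∃ o ∈ C, γ < o ∧ o < β) → β ∈ C

/-- A set `S` of cardinals is stationary in `κ`: it meets every club of `κ`. -/
def StatIn (S : Set Cardinal.{0}) (κ : Cardinal.{0}) : Prop :=
  ∀ C : Set Ordinal.{0}, IsClubIn C κ.ord → ∃ a ∈ S, a.ord ∈ C

/-- `κ` is Mahlo: strongly inaccessible and the regular cardinals below `κ`
are stationary in `κ`. -/
def IsMahlo (κ : Cardinal.{0}) : Prop :=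
  κ.IsInaccessible ∧ StatIn {a | a < κ ∧ a.IsRegular} κ

/-- `κ` is weakly compact: strongly inaccessible and `κ → (κ)²₂`. -/
def IsWeaklyCompact (κ : Cardinal.{0}) : Prop :=
  κ.IsInaccessible ∧
    ∀ c : Ordinal.{0} → Ordinal.{0} → Bool,
      ∃ H ⊆ Set.Iio κ.ord, #H = Cardinal.lift.{1} κ ∧
        ∃ b : Bool, ∀ α ∈ H, ∀ β ∈ H, α < β → c α β = b

/-- `θ` carries a Jónsson algebra: there is `F` from finite subsets of `θ` to `θ`
such that `F` applied to finite subsets of any `θ`-sized `H ⊆ θ` covers `θ`. -/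
def CarriesJonsson (θ : Cardinal.{0}) : Prop :=
  ∃ F : Finset Ordinal.{0} → Ordinal.{0},
    (∀ s : Finset Ordinal.{0}, (↑s : Set Ordinal) ⊆ Set.Iio θ.ord → F s < θ.ord) ∧
    ∀ H ⊆ Set.Iio θ.ord, #H = Cardinal.lift.{1} θ →
      ∀ γ < θ.ord, ∃ s : Finset Ordinal.{0}, (↑s : Set Ordinal) ⊆ H ∧ F s = γ

/-- `cf(∏A/J_bd)`: the least cardinality of a subset of `∏A` cofinal modulo
the ideal of bounded subsets of `A`. -/
noncomputable def cofJbd (A : Set Cardinal.{0}) : Cardinal.{1} :=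
  sInf {c : Cardinal.{1} | ∃ S ⊆ piSet A, #S = c ∧
    ∀ f ∈ piSet A, ∃ g ∈ S, ∃ b < sSup A, ∀ a : ↥A, b < (a : Cardinal) → f a ≤ g a}

/-- `μ` is a limit cardinal. -/
def IsLimitCard (μ : Cardinal.{0}) : Prop :=
  ℵ₀ ≤ μ ∧ ∀ ν < μ, Order.succ ν < μ

section Helpers

open Classical in
private lemma liftreg {κ : Cardinal.{0}} (h : κ.IsRegular) : (Cardinal.lift.{1} κ).IsRegular := by
  constructor
  · simpa using h.1
  · rw [← Cardinal.lift_ord, ← Ordinal.lift_cof, Cardinal.lift_le]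
    exact h.2

private lemma mk_lt_of_bounded {κ : Cardinal.{0}} (hκ : ℵ₀ ≤ κ) {S : Set Ordinal.{0}}
    {β : Ordinal.{0}} (hβ : β < κ.ord) (hS : ∀ α ∈ S, α ≤ β) : #S < Cardinal.lift.{1} κ := by
  calc #S ≤ #(Set.Iic β) := Cardinal.mk_le_mk_of_subset hS
    _ = #(Set.Iio (Order.succ β)) := by rw [Order.Iio_succ_of_not_isMax (not_isMax β)]
    _ = Cardinal.lift.{1} (Order.succ β).card := Ordinal.mk_Iio_ordinal _
    _ < Cardinal.lift.{1} κ := by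
        rw [Cardinal.lift_lt, ← Cardinal.lt_ord]
        exact (Cardinal.isSuccLimit_ord hκ).succ_lt hβ

private lemma bdd_tool {κ : Cardinal.{0}} (hreg : κ.IsRegular) {S : Set Ordinal.{0}}
    (hsub : ∀ α ∈ S, α < κ.ord) (hcard : #S < Cardinal.lift.{1} κ) :
    ∃ β < κ.ord, ∀ α ∈ S, α ≤ β := by
  have hsmall : Small.{0} ↥S := small_subset (show S ⊆ Set.Iio κ.ord from fun x hx => hsub x hx)
  set f : Shrink.{0} ↥S → Ordinal.{0} := fun x => ((equivShrink ↥S).symm x).1 with hf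
  have hlt : ∀ x, f x < κ.ord := fun x => hsub _ ((equivShrink ↥S).symm x).2
  have hmk : #(Shrink.{0} ↥S) < κ := by
    rw [← Cardinal.lift_lt.{0,1}]
    calc Cardinal.lift.{1} #(Shrink.{0} ↥S) = #↥S := Cardinal.lift_mk_shrink'' ↥S
      _ < Cardinal.lift.{1} κ := hcard
  have : iSup f < κ.ord := Ordinal.iSup_lt_ord (by rwa [hreg.cof_eq]) hlt
  refine ⟨iSup f, this, fun α hα => ?_⟩
  have h2 : α = f (equivShrink ↥S ⟨α, hα⟩) := by simp [hf]
  rw [h2]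
  exact le_ciSup (Ordinal.bddAbove_range f) _

variable {A : Set Cardinal.{0}}

/-- strict lexicographic order on functions `↥A → Ordinal` -/
private def LexLt (f g : ↥A → Ordinal.{0}) : Prop :=
  ∃ a, f a < g a ∧ ∀ b < a, f b = g b

private lemma lexLt_irrefl (f : ↥A → Ordinal.{0}) : ¬ LexLt f f := by
  rintro ⟨a, h, -⟩; exact lt_irrefl _ h

private lemma lexLt_trans {f g h : ↥A → Ordinal.{0}} (h1 : LexLt f g) (h2 : LexLt g h) :
    LexLt f h := by
  obtain ⟨a1, hlt1, heq1⟩ := h1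
  obtain ⟨a2, hlt2, heq2⟩ := h2
  rcases lt_trichotomy a1 a2 with hc | hc | hc
  · exact ⟨a1, by rw [← heq2 a1 hc]; exact hlt1,
      fun b hb => (heq1 b hb).trans (heq2 b (hb.trans hc))⟩
  · subst hc; exact ⟨a1, hlt1.trans hlt2, fun b hb => (heq1 b hb).trans (heq2 b hb)⟩
  · exact ⟨a2, by rw [heq1 a2 hc]; exact hlt2,
      fun b hb => (heq1 b (hb.trans hc)).trans (heq2 b hb)⟩

private lemma lexLt_total {f g : ↥A → Ordinal.{0}} (hne : f ≠ g) : LexLt f g ∨ LexLt g f := by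
  have hS : {a : ↥A | f a ≠ g a}.Nonempty := by
    by_contra h
    exact hne (funext fun a => by
      by_contra hc
      exact h ⟨a, hc⟩)
  obtain ⟨a, ha, hmin⟩ := (@wellFounded_lt ↥A _ _).has_min _ hS
  have hb : ∀ b < a, f b = g b := fun b hb => by
    by_contra hc
    exact hmin b hc hb
  rcases lt_or_gt_of_ne (show f a ≠ g a from ha) with h | h
  · exact Or.inl ⟨a, h, hb⟩
  · exact Or.inr ⟨a, h, fun b hbb => (hb b hbb).symm⟩

/-- truncation below an ordinal `c` -/
private noncomputable def truncF (c : Ordinal.{0}) (f : ↥A → Ordinal.{0}) : ↥A → Ordinal.{0} :=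
  fun a => if (a : Cardinal).ord < c then f a else 0

private lemma truncF_eq_iff {c : Ordinal.{0}} {f g : ↥A → Ordinal.{0}} :
    truncF c f = truncF c g ↔ ∀ a : ↥A, (a : Cardinal).ord < c → f a = g a := by
  constructor
  · intro h a ha
    have := congrFun h a
    simpa [truncF, ha] using this
  · intro h
    funext a
    by_cases ha : (a : Cardinal).ord < c <;> simp [truncF, ha]
    exact h a ha

private lemma lexLt_truncF {c : Ordinal.{0}} {f g : ↥A → Ordinal.{0}} (h : LexLt f g) :
    LexLt (truncF c f) (truncF c g) ∨ truncF c f = truncF c g := by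
  obtain ⟨a, hlt, heq⟩ := h
  by_cases hc : (a : Cardinal).ord < c
  · left
    refine ⟨a, by simpa [truncF, hc] using hlt, fun b hb => ?_⟩
    by_cases hbc : (b : Cardinal).ord < c <;> simp [truncF, hbc]
    exact heq b hb
  · right
    rw [truncF_eq_iff]
    intro b hbc
    apply heq
    have h1 : (b : Cardinal).ord < (a : Cardinal).ord := lt_of_lt_of_le hbc (not_lt.mp hc)
    have h2 := Cardinal.ord_lt_ord.mp h1
    exact_mod_cast h2

private lemma truncF_three {c : Ordinal.{0}} {f g h : ↥A → Ordinal.{0}} (h1 : LexLt f g)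
    (h2 : LexLt g h) (h3 : truncF c f = truncF c h) : truncF c f = truncF c g := by
  rcases lexLt_truncF (c := c) h1 with hfg | hfg
  · rcases lexLt_truncF (c := c) h2 with hgh | hgh
    · exact absurd (h3 ▸ lexLt_trans hfg hgh) (lexLt_irrefl _)
    · rw [h3, ← hgh]
  · exact hfg

private lemma mk_trunc_lt {κ : Cardinal.{0}} (hin : κ.IsInaccessible)
    {c : Ordinal.{0}} (hc : c < κ.ord) :
    #{f : ↥A → Ordinal.{0} | ∃ g ∈ piSet A, truncF c g = f} < Cardinal.lift.{1} κ := by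
  classical
  set W := {f : ↥A → Ordinal.{0} | ∃ g ∈ piSet A, truncF c g = f}
  set A' := {a : ↥A // (a : Cardinal).ord < c}
  have hval : ∀ f ∈ W, ∀ a : A', f a.1 < c := by
    rintro f ⟨g, hg, rfl⟩ a
    simp only [truncF, a.2, if_pos]
    exact (hg a.1).trans a.2
  have hzero : ∀ f ∈ W, ∀ a : ↥A, ¬ (a : Cardinal).ord < c → f a = 0 := by
    rintro f ⟨g, hg, rfl⟩ a ha
    simp [truncF, ha]
  set j : ↥W → (A' → ↥(Set.Iio c)) := fun f a => ⟨f.1 a.1, hval f.1 f.2 a⟩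
  have hinj : Function.Injective j := by
    rintro ⟨f, hf⟩ ⟨g, hg⟩ hj
    ext a
    show f a = g a
    by_cases ha : (a : Cardinal).ord < c
    · have := congrFun hj ⟨a, ha⟩
      simpa [j, Subtype.ext_iff] using this
    · rw [hzero f hf a ha, hzero g hg a ha]
  have h1 : #↥W ≤ #(A' → ↥(Set.Iio c)) := Cardinal.mk_le_of_injective hinj
  have hA' : #A' ≤ Cardinal.lift.{1} c.card := by
    refine le_trans (Cardinal.mk_le_of_injective (f := fun a : A' =>
      (⟨(a.1 : Cardinal).ord, a.2⟩ : ↥(Set.Iio c))) ?_) (le_of_eq (Ordinal.mk_Iio_ordinal c))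
    rintro ⟨a, ha⟩ ⟨b, hb⟩ h
    have h1 : (a : Cardinal).ord = (b : Cardinal).ord := congrArg Subtype.val h
    have h2 : (a : Cardinal) = b := Cardinal.ord_injective h1
    exact Subtype.ext (Subtype.ext h2)
  set μ := max c.card ℵ₀ with hμ
  have hμκ : μ < κ := max_lt (Cardinal.lt_ord.mp hc) hin.1
  have hμ0 : Cardinal.lift.{1} μ ≠ 0 := by
    have h0 : (0 : Cardinal.{0}) < μ := lt_of_lt_of_le Cardinal.aleph0_pos (le_max_right _ _)
    have : (0 : Cardinal.{1}) < Cardinal.lift.{1} μ := by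
      simpa using Cardinal.lift_lt.{0,1}.mpr h0
    exact this.ne'
  have h2 : #(A' → ↥(Set.Iio c)) = #↥(Set.Iio c) ^ #A' := (Cardinal.power_def _ _).symm
  have h3 : #↥(Set.Iio c) ^ #A' ≤ Cardinal.lift.{1} μ ^ Cardinal.lift.{1} μ := by
    calc #↥(Set.Iio c) ^ #A' ≤ Cardinal.lift.{1} μ ^ #A' := by
          apply Cardinal.power_le_power_right
          rw [Ordinal.mk_Iio_ordinal c]
          exact Cardinal.lift_le.mpr (le_max_left _ _)
      _ ≤ Cardinal.lift.{1} μ ^ Cardinal.lift.{1} μ := by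
          apply Cardinal.power_le_power_left hμ0
          exact hA'.trans (Cardinal.lift_le.mpr (le_max_left _ _))
  have h4 : Cardinal.lift.{1} μ ^ Cardinal.lift.{1} μ = Cardinal.lift.{1} (μ ^ μ) := by
    rw [Cardinal.lift_power]
  have h5 : μ ^ μ < κ := by
    rw [Cardinal.power_self_eq (le_max_right _ _)]
    exact hin.isStrongPrelimit hμκ
  calc #↥W ≤ _ := h1
    _ = _ := h2
    _ ≤ _ := h3
    _ = _ := h4
    _ < Cardinal.lift.{1} κ := Cardinal.lift_lt.mpr h5

private lemma exists_threshold {κ : Cardinal.{0}} (hreg : κ.IsRegular) (hin : κ.IsInaccessible)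
    {H : Set Ordinal.{0}} (hHsub : H ⊆ Set.Iio κ.ord) (hHcard : #H = Cardinal.lift.{1} κ)
    (fv : Ordinal.{0} → ↥A → Ordinal.{0}) (hfv : ∀ α ∈ H, fv α ∈ piSet A)
    {c : Ordinal.{0}} (hc : c < κ.ord)
    (hconv : ∀ α β γ, α ∈ H → β ∈ H → γ ∈ H → α < β → β < γ →
      truncF c (fv α) = truncF c (fv γ) → truncF c (fv α) = truncF c (fv β)) :
    ∃ δ ∈ H, ∀ α ∈ H, δ ≤ α → truncF c (fv α) = truncF c (fv δ) := by
  classical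
  set t : Ordinal.{0} → (↥A → Ordinal.{0}) := fun α => truncF c (fv α) with ht
  set V := t '' H with hV
  have hVW : V ⊆ {f | ∃ g ∈ piSet A, truncF c g = f} := by
    rintro f ⟨α, hα, rfl⟩
    exact ⟨fv α, hfv α hα, rfl⟩
  have hVcard : #↥V < Cardinal.lift.{1} κ :=
    (Cardinal.mk_le_mk_of_subset hVW).trans_lt (mk_trunc_lt hin hc)
  set Fib : ↥V → Set Ordinal.{0} := fun v => {α | α ∈ H ∧ t α = v.1} with hFib
  have hcover : H ⊆ ⋃ v, Fib v := fun α hα => Set.mem_iUnion.mpr ⟨⟨t α, ⟨α, hα, rfl⟩⟩, hα, rfl⟩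
  have hIio : #(Set.Iio κ.ord) = Cardinal.lift.{1} κ := by
    rw [Ordinal.mk_Iio_ordinal, Cardinal.card_ord]
  have hbig : ∃ v, #(Fib v) = Cardinal.lift.{1} κ := by
    by_contra hno; push_neg at hno
    have hlt : ∀ v, #(Fib v) < Cardinal.lift.{1} κ := by
      intro v
      refine lt_of_le_of_ne ?_ (hno v)
      calc #(Fib v) ≤ #(Set.Iio κ.ord) :=
            Cardinal.mk_le_mk_of_subset (fun α hα => hHsub hα.1)
        _ = Cardinal.lift.{1} κ := hIio
    have hle : #H ≤ Cardinal.sum fun v => #(Fib v) :=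
      (Cardinal.mk_le_mk_of_subset hcover).trans Cardinal.mk_iUnion_le_sum_mk
    have hslt : (Cardinal.sum fun v => #(Fib v)) < Cardinal.lift.{1} κ :=
      Cardinal.sum_lt_of_isRegular (liftreg hreg) hVcard hlt
    rw [hHcard] at hle
    exact absurd (hle.trans_lt hslt) (lt_irrefl _)
  obtain ⟨v, hv⟩ := hbig
  have hne : (Fib v).Nonempty := by
    rw [← Set.nonempty_coe_sort, ← Cardinal.mk_ne_zero_iff, hv]
    intro h0
    have : (0:Cardinal.{1}) < Cardinal.lift.{1} κ := by
      simpa using Cardinal.lift_lt.{0,1}.mpr (lt_of_lt_of_le Cardinal.aleph0_pos hreg.1)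
    exact this.ne' h0
  obtain ⟨δ, hδ⟩ := hne
  have hunb : ∀ β < κ.ord, ∃ α ∈ Fib v, β < α := by
    intro β hβ
    by_contra hcon; push_neg at hcon
    have := mk_lt_of_bounded hreg.aleph0_le hβ hcon
    rw [hv] at this
    exact lt_irrefl _ this
  refine ⟨δ, hδ.1, fun α hα hle => ?_⟩
  rcases eq_or_lt_of_le hle with rfl | hlt
  · rfl
  · obtain ⟨γ, hγ, hγgt⟩ := hunb α (hHsub hα)
    have h3 : t δ = t γ := hδ.2.trans hγ.2.symm
    exact (hconv δ α γ hδ.1 hα hγ.1 hlt hγgt h3).symm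

end Helpers


/-- If `κ` is weakly compact and `A ⊆ κ` is an unbounded,
nonstationary set of infinite regular cardinals, then `κ ∉ spec(A)`. -/
theorem statement12 (κ : Cardinal.{0}) (hwc : IsWeaklyCompact κ)
    (A : Set Cardinal.{0}) (hA : ∀ a ∈ A, a.IsRegular) (hsub : ∀ a ∈ A, a < κ)
    (hunb : ∀ β < κ, ∃ a ∈ A, β < a) (hns : ¬ StatIn A κ) :
    κ ∉ spec A := by
  classical
  intro hspec
  obtain ⟨hregκ, F, hFsub, hFcard, hFunb⟩ := hspec
  obtain ⟨hin, hpart⟩ := hwc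
  have hℵ0 : ℵ₀ < κ := hin.1
  -- a club disjoint from A
  have hns' : ∃ C, IsClubIn C κ.ord ∧ ∀ a ∈ A, a.ord ∉ C := by
    simp only [StatIn] at hns
    push_neg at hns
    exact hns
  obtain ⟨C, hC, hCA⟩ := hns'
  obtain ⟨hCsub, hCunb, hCclosed⟩ := hC
  -- enumerate F by ordinals below κ.ord
  have hIio : #(Set.Iio κ.ord) = #↥F := by
    rw [Ordinal.mk_Iio_ordinal, Cardinal.card_ord, hFcard]
  obtain ⟨φ⟩ := Cardinal.eq.mp hIio
  set fv : Ordinal.{0} → ↥A → Ordinal.{0} :=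
    fun α => if h : α < κ.ord then ((φ ⟨α, h⟩ : ↥F) : ↥A → Ordinal.{0}) else fun _ => 0 with hfvdef
  have hfvF : ∀ α, α < κ.ord → fv α ∈ F := by
    intro α h
    simp only [hfvdef, dif_pos h]
    exact (φ ⟨α, h⟩).2
  have hfvpi : ∀ α, α < κ.ord → fv α ∈ piSet A := fun α h => hFsub (hfvF α h)
  have hfvinj : ∀ α β, α < κ.ord → β < κ.ord → fv α = fv β → α = β := by
    intro α β hα hβ h
    simp only [hfvdef, dif_pos hα, dif_pos hβ] at h
    have h2 : φ ⟨α, hα⟩ = φ ⟨β, hβ⟩ := Subtype.ext h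
    have h3 := φ.injective h2
    exact congrArg Subtype.val h3
  -- the coloring and a homogeneous set
  set col : Ordinal.{0} → Ordinal.{0} → Bool := fun α β => decide (LexLt (fv α) (fv β)) with hcol
  obtain ⟨H, hHsub, hHcard, b, hhom⟩ := hpart col
  have hHlt : ∀ α ∈ H, α < κ.ord := fun α h => hHsub h
  have hpair : ∀ α β, α ∈ H → β ∈ H → α < β →
      (LexLt (fv α) (fv β) ∧ b = true) ∨ (LexLt (fv β) (fv α) ∧ b = false) := by
    intro α β hα hβ hlt
    have h := hhom α hα β hβ hlt
    cases hb : b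
    · right
      refine ⟨?_, rfl⟩
      rw [hb] at h
      have hnlt : ¬ LexLt (fv α) (fv β) := by
        have := of_decide_eq_false h
        exact this
      have hne : fv β ≠ fv α := by
        intro he
        exact absurd (hfvinj β α (hHlt _ hβ) (hHlt _ hα) he) (ne_of_gt hlt)
      rcases lexLt_total hne with h1 | h1
      · exact h1
      · exact absurd h1 hnlt
    · left
      rw [hb] at h
      exact ⟨of_decide_eq_true h, rfl⟩
  -- convexity of truncation fibers along H
  have hconv : ∀ c : Ordinal.{0}, ∀ α β γ, α ∈ H → β ∈ H → γ ∈ H → α < β → β < γ →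
      truncF c (fv α) = truncF c (fv γ) → truncF c (fv α) = truncF c (fv β) := by
    intro c α β γ hα hβ hγ h1 h2 h3
    rcases hpair α β hα hβ h1 with ⟨l1, hb1⟩ | ⟨l1, hb1⟩
    · rcases hpair β γ hβ hγ h2 with ⟨l2, _⟩ | ⟨l2, hb2⟩
      · exact truncF_three l1 l2 h3
      · rw [hb1] at hb2; cases hb2
    · rcases hpair β γ hβ hγ h2 with ⟨l2, hb2⟩ | ⟨l2, _⟩
      · rw [hb1] at hb2; cases hb2
      · have h4 := truncF_three l2 l1 h3.symm
        rw [h3]; exact h4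
  -- thresholds
  have hthr : ∀ c : Ordinal.{0}, c < κ.ord →
      ∃ δ, δ ∈ H ∧ ∀ α ∈ H, δ ≤ α → truncF c (fv α) = truncF c (fv δ) := by
    intro c hc
    have := exists_threshold hregκ hin hHsub hHcard fv
      (fun α hα => hfvpi α (hHlt α hα)) hc (hconv c)
    obtain ⟨δ, h1, h2⟩ := this
    exact ⟨δ, h1, h2⟩
  choose! δf hδH hδspec using hthr
  -- H is unbounded in κ.ord
  have hHunb : ∀ β, β < κ.ord → ∃ α ∈ H, β < α := by
    intro β hβ
    by_contra hcon; push_neg at hcon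
    have := mk_lt_of_bounded hregκ.aleph0_le hβ hcon
    rw [hHcard] at this
    exact lt_irrefl _ this
  -- enumeration of the club (padded to be unbounded in all ordinals)
  set C' : Set Ordinal.{0} := C ∪ Set.Ici κ.ord with hC'def
  have hC'unb : ¬ BddAbove C' := by
    rintro ⟨β, hβ⟩
    have hx : max κ.ord (Order.succ β) ∈ C' := Or.inr (Set.mem_Ici.mpr (le_max_left _ _))
    have h1 := hβ hx
    have h2 : β < max κ.ord (Order.succ β) := lt_of_lt_of_le (Order.lt_succ β) (le_max_right _ _)
    exact absurd h1 (not_le.mpr h2)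
  set eC := Ordinal.enumOrd C' with heC
  have heCmem : ∀ ι, eC ι ∈ C' := fun ι => Ordinal.enumOrd_mem hC'unb ι
  have heCmono : StrictMono eC := Ordinal.enumOrd_strictMono hC'unb
  -- bounds for the thresholds along the club
  have hmf : ∀ ι : Ordinal.{0}, ι < κ.ord →
      ∃ β, β < κ.ord ∧ ∀ x ∈ δf '' (C ∩ Set.Iic (eC ι)), x ≤ β := by
    intro ι hι
    apply bdd_tool hregκ
    · rintro x ⟨c, hc, rfl⟩
      exact hHsub (hδH c (hCsub hc.1))
    · have hmap : ∀ x : ↥(C ∩ Set.Iic (eC ι) : Set Ordinal.{0}), ∃ y : ↥(Set.Iic ι),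
          eC y.1 = x.1 := by
        rintro ⟨x, hxC, hxle⟩
        have : x ∈ Set.range eC := by
          rw [heC, Ordinal.range_enumOrd hC'unb]
          exact Or.inl hxC
        obtain ⟨ιx, hιx⟩ := this
        refine ⟨⟨ιx, ?_⟩, hιx⟩
        have hle2 : eC ιx ≤ eC ι := by rw [hιx]; exact hxle
        exact heCmono.le_iff_le.mp hle2
      choose ψ hψ using hmap
      have hψinj : Function.Injective ψ := by
        intro x y h
        apply Subtype.ext
        rw [← hψ x, ← hψ y, h]
      calc #(δf '' (C ∩ Set.Iic (eC ι))) ≤ #(C ∩ Set.Iic (eC ι) : Set Ordinal.{0}) :=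
            Cardinal.mk_image_le
        _ ≤ #(Set.Iic ι) := Cardinal.mk_le_of_injective hψinj
        _ < Cardinal.lift.{1} κ :=
            mk_lt_of_bounded hregκ.aleph0_le hι (fun α hα => hα)
  choose! mf hmf1 hmf2 using hmf
  -- the fast diagonal selection
  have hsex : ∀ ι : Ordinal.{0}, ι < κ.ord → ∃ α, α ∈ H ∧ max ι (mf ι) < α := by
    intro ι hι
    obtain ⟨α, hα, hgt⟩ := hHunb _ ((max_lt hι (hmf1 ι hι)))
    exact ⟨α, hα, hgt⟩
  choose! s hsH hsgt using hsex
  set S' := s '' Set.Iio κ.ord with hS'def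
  have hS'lt : ∀ α ∈ S', α < κ.ord := by
    rintro α ⟨ι, hι, rfl⟩
    exact hHlt _ (hsH ι hι)
  have hS'card : #S' = Cardinal.lift.{1} κ := by
    refine le_antisymm ?_ ?_
    · calc #S' ≤ #(Set.Iio κ.ord) :=
          Cardinal.mk_le_mk_of_subset (fun α h => hS'lt α h)
        _ = Cardinal.lift.{1} κ := by rw [Ordinal.mk_Iio_ordinal, Cardinal.card_ord]
    · by_contra hlt
      push_neg at hlt
      obtain ⟨β, hβ, hbd⟩ := bdd_tool hregκ hS'lt hlt
      have hmem : s β ∈ S' := ⟨β, hβ, rfl⟩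
      have h1 := hbd _ hmem
      have h2 : β < s β := lt_of_le_of_lt (le_max_left _ _) (hsgt β hβ)
      exact absurd h1 (not_le.mpr h2)
  set F₀ := fv '' S' with hF₀def
  have hF₀sub : F₀ ⊆ F := by
    rintro _ ⟨α, hα, rfl⟩
    exact hfvF α (hS'lt _ hα)
  have hF₀card : #F₀ = Cardinal.lift.{1} κ := by
    rw [Cardinal.mk_image_eq_of_injOn]
    · exact hS'card
    · exact fun α hα β hβ h => hfvinj α β (hS'lt _ hα) (hS'lt _ hβ) h
  refine hFunb F₀ hF₀sub hF₀card ?_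
  -- per-coordinate data: an index ιa in the club enumeration sitting just above a
  have key : ∀ a : ↥A, ∃ ιa : Ordinal.{0}, ιa < κ.ord ∧ ιa.card < (a : Cardinal) ∧
      ((a : Cardinal)).ord < eC ιa ∧ eC ιa < κ.ord ∧ eC ιa ∈ C := by
    intro a
    have haA := a.2
    have hareg := hA a haA
    have haℵ0 : ℵ₀ ≤ (a : Cardinal) := hareg.aleph0_le
    have haord : ((a : Cardinal)).ord < κ.ord := Cardinal.ord_lt_ord.mpr (hsub a haA)
    have hanotC : ((a : Cardinal)).ord ∉ C := hCA a haA
    have halim : Order.IsSuccLimit ((a : Cardinal)).ord := Cardinal.isSuccLimit_ord haℵ0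
    have ha0 : ((a : Cardinal)).ord ≠ 0 := halim.pos.ne'
    -- the γ below which C ∩ a.ord is trapped
    have hnc : ¬ (∀ γ < ((a : Cardinal)).ord, ∃ o ∈ C, γ < o ∧ o < ((a : Cardinal)).ord) :=
      fun h => hanotC (hCclosed _ haord ha0 h)
    push_neg at hnc
    obtain ⟨γa, hγa1, hγa2⟩ := hnc
    -- the least club element above a.ord
    have hCa : {o : Ordinal.{0} | o ∈ C ∧ ((a : Cardinal)).ord < o}.Nonempty := by
      obtain ⟨o, ho1, ho2⟩ := hCunb _ haord
      exact ⟨o, ho1, ho2⟩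
    set ca := sInf {o : Ordinal.{0} | o ∈ C ∧ ((a : Cardinal)).ord < o} with hcadef
    have hca := csInf_mem hCa
    have hcaκ : ca < κ.ord := hCsub hca.1
    have hrange : ca ∈ Set.range eC := by
      rw [heC, Ordinal.range_enumOrd hC'unb]
      exact Or.inl hca.1
    obtain ⟨ιa, hιa⟩ := hrange
    have hιaκ : ιa < κ.ord := lt_of_le_of_lt heCmono.le_apply (hιa ▸ hcaκ)
    refine ⟨ιa, hιaκ, ?_, hιa ▸ hca.2, hιa ▸ hcaκ, hιa ▸ hca.1⟩
    -- counting: Iio ιa injects into Iic γa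
    have hproof : ∀ ι', ι' < ιa → eC ι' ≤ γa := by
      intro ι' hι'
      have h1 : eC ι' < ca := hιa ▸ heCmono hι'
      have h2 : eC ι' ∈ C := by
        rcases heCmem ι' with h | h
        · exact h
        · exact absurd (lt_of_le_of_lt h (h1.trans hcaκ)) (lt_irrefl _)
      have h3 : ¬ ((a : Cardinal)).ord < eC ι' := by
        intro hgt
        have : ca ≤ eC ι' := csInf_le (OrderBot.bddBelow _) ⟨h2, hgt⟩
        exact absurd this (not_le.mpr h1)
      have h4 : eC ι' < ((a : Cardinal)).ord :=
        lt_of_le_of_ne (not_lt.mp h3) (fun he => hanotC (he ▸ h2))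
      by_contra h5
      push_neg at h5
      exact absurd h4 (not_lt.mpr (hγa2 _ h2 h5))
    have hinj2 : #(Set.Iio ιa) ≤ #(Set.Iic γa) := by
      refine Cardinal.mk_le_of_injective (f := fun x : ↥(Set.Iio ιa) =>
        (⟨eC x.1, hproof x.1 x.2⟩ : ↥(Set.Iic γa))) ?_
      intro x y h
      exact Subtype.ext (heCmono.injective (congrArg Subtype.val h))
    rw [Ordinal.mk_Iio_ordinal] at hinj2
    have hIic : #(Set.Iic γa) = Cardinal.lift.{1} (Order.succ γa).card := by
      rw [← Order.Iio_succ_of_not_isMax (not_isMax γa), Ordinal.mk_Iio_ordinal]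
    rw [hIic, Cardinal.lift_le] at hinj2
    refine lt_of_le_of_lt hinj2 ?_
    rw [← Cardinal.lt_ord]
    exact halim.succ_lt hγa1
  choose ιf hι1 hι2 hι3 hι4 hι5 using key
  -- the bound
  set hbf : ↥A → Ordinal.{0} :=
    fun a => max (fv (s (ιf a)) a) (Ordinal.bsup (ιf a) (fun ι _ => fv (s ι) a)) with hhbf
  have hSmem : ∀ ι, ι < κ.ord → s ι < κ.ord := fun ι hι => hHlt _ (hsH ι hι)
  have hagree : ∀ a : ↥A, ∀ ι, ι < κ.ord → ιf a ≤ ι → fv (s ι) a = fv (s (ιf a)) a := by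
    intro a ι hι hle
    set c := eC (ιf a) with hcdef
    have hcκ : c < κ.ord := hι4 a
    have hbnd : ∀ ι', ι' < κ.ord → ιf a ≤ ι' → δf c < s ι' := by
      intro ι' hι' hle'
      have hmem : δf c ∈ δf '' (C ∩ Set.Iic (eC ι')) :=
        ⟨c, ⟨hι5 a, heCmono.monotone hle'⟩, rfl⟩
      exact lt_of_le_of_lt (le_trans (hmf2 ι' hι' _ hmem) (le_max_right _ _)) (hsgt ι' hι')
    have h1 : δf c ≤ s ι := le_of_lt (hbnd ι hι hle)
    have h2 : δf c ≤ s (ιf a) := le_of_lt (hbnd (ιf a) (hι1 a) le_rfl)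
    have e1 := hδspec c hcκ (s ι) (hsH ι hι) h1
    have e2 := hδspec c hcκ (s (ιf a)) (hsH _ (hι1 a)) h2
    have e3 : truncF c (fv (s ι)) = truncF c (fv (s (ιf a))) := e1.trans e2.symm
    exact truncF_eq_iff.mp e3 a (hι3 a)
  refine ⟨hbf, ?_, ?_⟩
  · -- hbf ∈ piSet A
    intro a
    apply max_lt
    · exact hfvpi _ (hSmem _ (hι1 a)) a
    · apply Ordinal.bsup_lt_ord
      · rw [(hA a a.2).cof_eq]
        exact hι2 a
      · intro ι hι
        exact hfvpi _ (hSmem ι (hι.trans (hι1 a))) a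
  · rintro f ⟨α, ⟨ι, hι, rfl⟩, rfl⟩ a
    rcases le_or_gt (ιf a) ι with hle | hlt
    · rw [hagree a ι hι hle]
      exact le_max_left _ _
    · exact le_trans (Ordinal.le_bsup (fun ι _ => fv (s ι) a) ι hlt) (le_max_right _ _)


end TukeySpec
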